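/- Let G be a group and H, K ≤ G subgroups. Choosing for each double coset D in the double coset space H\G/K a representative a_D ∈ G, there is an H-equivariant bijection G ⧸ K ≃ Σ (D : H\G/K), H ⧸ ((a_D K a_D⁻¹).subgroupOf H), where H acts on G ⧸ K by left translation and on each summand H ⧸ ((a_D K a_D⁻¹).subgroupOf H) by left translation (the double coset formula res_H^G G/K ≅ ⨿_{a ∈ H\G/K} H/(H ∩ aKa⁻¹)). -/

import Mathlib

/-- The double coset formula: choosing a representative `rep D ∈ G` for each double coset
`D ∈ H\G/K`, there is an `H`-equivariant bijection
`G ⧸ K ≃ Σ (D : H\G/K), H ⧸ ((rep D) K (rep D)⁻¹ ⊓ H)`. -/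
theorem double_coset_formula {G : Type*} [Group G] (H K : Subgroup G)
    (rep : DoubleCoset.Quotient (H : Set G) (K : Set G) → G)
    (hrep : ∀ D : DoubleCoset.Quotient (H : Set G) (K : Set G), DoubleCoset.mk H K (rep D) = D) :
    ∃ e : (G ⧸ K) ≃
        (Σ D : DoubleCoset.Quotient (H : Set G) (K : Set G),
          H ⧸ ((Subgroup.map (MulAut.conj (rep D)).toMonoidHom K).subgroupOf H)),
      ∀ (h : H) (x : G ⧸ K),
        e (h • x) = ⟨(e x).1, h • (e x).2⟩ := by
  classical
  set L := fun D : DoubleCoset.Quotient (H : Set G) (K : Set G) =>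
    (Subgroup.map (MulAut.conj (rep D)).toMonoidHom K).subgroupOf H with hL
  have memL : ∀ (D) (h : H), h ∈ L D ↔ (rep D)⁻¹ * (h : G) * rep D ∈ K := by
    intro D h
    rw [hL]
    simp only [Subgroup.mem_subgroupOf, Subgroup.mem_map, MulEquiv.coe_toMonoidHom,
      MulAut.conj_apply]
    constructor
    · rintro ⟨k, hk, hEq⟩
      have : (rep D)⁻¹ * (h : G) * rep D = k := by
        rw [← hEq]; group
      rwa [this]
    · intro hk
      exact ⟨(rep D)⁻¹ * (h : G) * rep D, hk, by group⟩
  -- the map from the sigma type to G ⧸ K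
  let f : (Σ D : DoubleCoset.Quotient (H : Set G) (K : Set G), H ⧸ L D) → G ⧸ K := fun x =>
    Quotient.liftOn' x.2 (fun h => QuotientGroup.mk ((h : G) * rep x.1)) (by
      intro a b hab
      have hab' : a⁻¹ * b ∈ L x.1 := (QuotientGroup.leftRel_apply).mp hab
      rw [memL] at hab'
      apply (QuotientGroup.eq).mpr
      have : ((a : G) * rep x.1)⁻¹ * ((b : G) * rep x.1)
          = (rep x.1)⁻¹ * ((a⁻¹ * b : H) : G) * rep x.1 := by
        push_cast; group
      rw [this]; exact hab')
  have fmk : ∀ (D) (h : H), f ⟨D, QuotientGroup.mk h⟩ = QuotientGroup.mk ((h : G) * rep D) :=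
    fun D h => rfl
  have hinj : Function.Injective f := by
    rintro ⟨D₁, x₁⟩ ⟨D₂, x₂⟩ hEq
    obtain ⟨h₁, rfl⟩ := QuotientGroup.mk_surjective x₁
    obtain ⟨h₂, rfl⟩ := QuotientGroup.mk_surjective x₂
    rw [fmk, fmk] at hEq
    have hk : ((h₁ : G) * rep D₁)⁻¹ * ((h₂ : G) * rep D₂) ∈ K := (QuotientGroup.eq).mp hEq
    obtain ⟨k, hkK, hkeq⟩ : ∃ k ∈ K, (h₂ : G) * rep D₂ = (h₁ : G) * rep D₁ * k :=
      ⟨_, hk, by group⟩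
    have hD : D₁ = D₂ := by
      rw [← hrep D₁, ← hrep D₂, DoubleCoset.eq]
      exact ⟨(h₂ : G)⁻¹ * h₁, H.mul_mem (H.inv_mem h₂.2) h₁.2, k, hkK, by
        rw [show ((h₂ : G))⁻¹ * (h₁ : G) * rep D₁ * k
            = (h₂ : G)⁻¹ * ((h₁ : G) * rep D₁ * k) by group, ← hkeq]; group⟩
    subst hD
    refine Sigma.ext rfl ?_
    simp only [heq_eq_eq]
    apply (QuotientGroup.eq).mpr
    rw [memL]
    push_cast
    have : (rep D₁)⁻¹ * ((h₁ : G)⁻¹ * h₂) * rep D₁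
        = ((h₁ : G) * rep D₁)⁻¹ * ((h₂ : G) * rep D₁) := by group
    rw [this]; exact hk
  have hsurj : Function.Surjective f := by
    intro x
    obtain ⟨g, rfl⟩ := QuotientGroup.mk_surjective x
    set D := DoubleCoset.mk H K g with hD
    obtain ⟨h, hH, k, hK, hgk⟩ : ∃ h ∈ H, ∃ k ∈ K, g = h * rep D * k := by
      have := (DoubleCoset.eq H K (rep D) g).mp (by rw [hrep])
      exact this
    refine ⟨⟨D, QuotientGroup.mk ⟨h, hH⟩⟩, ?_⟩
    rw [fmk]
    apply (QuotientGroup.eq).mpr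
    simp only
    rw [hgk]
    have : (h * rep D)⁻¹ * (h * rep D * k) = k := by group
    rw [this]; exact hK
  set e := (Equiv.ofBijective f ⟨hinj, hsurj⟩).symm with he
  refine ⟨e, ?_⟩
  have hfe : ∀ x, f (e x) = x := fun x => (Equiv.ofBijective f ⟨hinj, hsurj⟩).apply_symm_apply x
  have hfequiv : ∀ (h : H) (y : Σ D, H ⧸ L D), f ⟨y.1, h • y.2⟩ = h • f y := by
    rintro h ⟨D, x⟩
    obtain ⟨h', rfl⟩ := QuotientGroup.mk_surjective x
    have : h • (QuotientGroup.mk h' : H ⧸ L D) = QuotientGroup.mk (h * h') := rfl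
    rw [this, fmk, fmk]
    have : ((h * h' : H) : G) * rep D = (h : G) * ((h' : G) * rep D) := by push_cast; group
    rw [this]
    rfl
  intro h x
  apply hinj
  rw [hfe]
  have := hfequiv h (e x)
  rw [hfe] at this
  exact this.symm
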